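/- Let b > 0 and w_1 ≥ w_2 ≥ ... ≥ w_N > 0 be reals with b ≤ N. Consider the linear program: maximize ∑_{i=1}^N x_i subject to ∑_{i=1}^N w_i^{-1} x_i ≤ b and 0 ≤ x_i ≤ w_i for all i. Let M = ⌊b⌋ and a = w_{M+1}(b − M). Then the optimal value equals ∑_{i=1}^{M} w_i + a; that is, every feasible point (x_1,...,x_N) satisfies ∑ x_i ≤ ∑_{i=1}^{M} w_i + a, and this bound is attained. -/

import Mathlib

theorem stmt5 (N : ℕ) (b : ℝ) (w : ℕ → ℝ) (hb : 0 < b) (hbN : b ≤ N)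
    (hmono : ∀ i j, 1 ≤ i → i ≤ j → j ≤ N → w j ≤ w i)
    (hpos : ∀ i, 1 ≤ i → i ≤ N → 0 < w i) :
    IsGreatest {z : ℝ | ∃ x : ℕ → ℝ,
        (∑ i ∈ Finset.Icc 1 N, (w i)⁻¹ * x i ≤ b) ∧
        (∀ i, 1 ≤ i → i ≤ N → 0 ≤ x i ∧ x i ≤ w i) ∧
        z = ∑ i ∈ Finset.Icc 1 N, x i}
      ((∑ i ∈ Finset.Icc 1 ⌊b⌋₊, w i) + w (⌊b⌋₊ + 1) * (b - (⌊b⌋₊ : ℝ))) := by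
  set M := ⌊b⌋₊ with hMdef
  have hMb : (M : ℝ) ≤ b := Nat.floor_le hb.le
  have hbM1 : b < (M : ℝ) + 1 := Nat.lt_floor_add_one b
  have hMN : M ≤ N := by
    have h := Nat.floor_mono hbN
    simpa [hMdef] using h
  have e1 : Finset.Icc 1 N = Finset.Ioc 0 N := by ext x; simp; omega
  have e2 : Finset.Icc 1 M = Finset.Ioc 0 M := by ext x; simp; omega
  have e3 : Finset.Icc (M+1) N = Finset.Ioc M N := by ext x; simp
  have hsplit : ∀ f : ℕ → ℝ, ∑ i ∈ Finset.Icc 1 N, f i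
      = ∑ i ∈ Finset.Icc 1 M, f i + ∑ i ∈ Finset.Icc (M+1) N, f i := by
    intro f
    rw [e1, e2, e3]
    exact (Finset.sum_Ioc_consecutive f (Nat.zero_le M) hMN).symm
  constructor
  · -- membership: the witness attains the value
    refine ⟨fun i => if i ≤ M then w i else if i = M+1 then w (M+1) * (b - M) else 0,
      ?_, ?_, ?_⟩
    · -- constraint
      rw [hsplit]
      have h1 : ∑ i ∈ Finset.Icc 1 M,
          (w i)⁻¹ * (if i ≤ M then w i else if i = M+1 then w (M+1) * (b - M) else 0)
          = (M : ℝ) := by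
        have e : ∀ i ∈ Finset.Icc 1 M,
            (w i)⁻¹ * (if i ≤ M then w i else if i = M+1 then w (M+1) * (b - M) else 0)
            = 1 := by
          intro i hi
          simp only [Finset.mem_Icc] at hi
          rw [if_pos hi.2, inv_mul_cancel₀ (hpos i hi.1 (hi.2.trans hMN)).ne']
        rw [Finset.sum_congr rfl e]
        simp
      have h2 : ∑ i ∈ Finset.Icc (M+1) N,
          (w i)⁻¹ * (if i ≤ M then w i else if i = M+1 then w (M+1) * (b - M) else 0)
          ≤ b - M := by
        have e : ∀ i ∈ Finset.Icc (M+1) N,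
            (w i)⁻¹ * (if i ≤ M then w i else if i = M+1 then w (M+1) * (b - M) else 0)
            = if i = M+1 then (w i)⁻¹ * (w (M+1) * (b - M)) else 0 := by
          intro i hi
          simp only [Finset.mem_Icc] at hi
          rw [if_neg (by omega)]
          by_cases h : i = M+1 <;> simp [h]
        rw [Finset.sum_congr rfl e, Finset.sum_ite_eq' (Finset.Icc (M+1) N) (M+1)
            (fun i => (w i)⁻¹ * (w (M+1) * (b - M)))]
        by_cases hc : M + 1 ≤ N
        · rw [if_pos (by simp [hc])]
          rw [← mul_assoc, inv_mul_cancel₀ (hpos (M+1) (by omega) hc).ne', one_mul]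
        · rw [if_neg (by simp [hc])]
          linarith
      linarith
    · -- box constraints
      intro i hi1 hiN
      by_cases h1 : i ≤ M
      · simp only [if_pos h1]
        exact ⟨(hpos i hi1 hiN).le, le_refl _⟩
      · by_cases h2 : i = M+1
        · subst h2
          simp only [if_neg h1, eq_self_iff_true, if_true]
          have hw : 0 < w (M+1) := hpos (M+1) (by omega) hiN
          constructor
          · exact mul_nonneg hw.le (by linarith)
          · nlinarith
        · simp only [if_neg h1, if_neg h2]
          exact ⟨le_refl _, (hpos i hi1 hiN).le⟩
    · -- value
      rw [hsplit]
      have h1 : ∑ i ∈ Finset.Icc 1 M,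
          (if i ≤ M then w i else if i = M+1 then w (M+1) * (b - M) else 0)
          = ∑ i ∈ Finset.Icc 1 M, w i := by
        refine Finset.sum_congr rfl (fun i hi => ?_)
        simp only [Finset.mem_Icc] at hi
        rw [if_pos hi.2]
      have h2 : ∑ i ∈ Finset.Icc (M+1) N,
          (if i ≤ M then w i else if i = M+1 then w (M+1) * (b - M) else 0)
          = w (M+1) * (b - M) := by
        have e : ∀ i ∈ Finset.Icc (M+1) N,
            (if i ≤ M then w i else if i = M+1 then w (M+1) * (b - M) else 0)
            = if i = M+1 then w (M+1) * (b - M) else 0 := by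
          intro i hi
          simp only [Finset.mem_Icc] at hi
          rw [if_neg (by omega)]
        rw [Finset.sum_congr rfl e,
          Finset.sum_ite_eq' (Finset.Icc (M+1) N) (M+1) (fun _ => w (M+1) * (b - M))]
        by_cases hc : M + 1 ≤ N
        · rw [if_pos (by simp [hc])]
        · rw [if_neg (by simp [hc])]
          have hMN' : M = N := by omega
          have : b = (M : ℝ) := le_antisymm (by rw [hMN']; exact_mod_cast hbN) hMb
          rw [this]; ring
      rw [h1, h2]
  · -- upper bound
    rintro z ⟨x, hsum, hbox, rfl⟩
    by_cases hcase : M = N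
    · -- b = N, bound is just sum of w
      have hbeq : b = (M : ℝ) := le_antisymm (by rw [hcase]; exact_mod_cast hbN) hMb
      have hz : b - (M : ℝ) = 0 := by rw [hbeq]; ring
      rw [hz, mul_zero, add_zero, hcase]
      exact Finset.sum_le_sum (fun i hi => by
        simp only [Finset.mem_Icc] at hi; exact (hbox i hi.1 hi.2).2)
    · have hMN' : M + 1 ≤ N := by omega
      set c := w (M+1) with hcdef
      have hc : 0 < c := hpos (M+1) (by omega) hMN'
      have key : ∀ i ∈ Finset.Icc 1 N,
          x i ≤ (if i ≤ M then w i - c else 0) + c * ((w i)⁻¹ * x i) := by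
        intro i hi
        simp only [Finset.mem_Icc] at hi
        have hw : 0 < w i := hpos i hi.1 hi.2
        have hy : (w i)⁻¹ * w i = 1 := inv_mul_cancel₀ hw.ne'
        obtain ⟨hx0, hxw⟩ := hbox i hi.1 hi.2
        by_cases h1 : i ≤ M
        · rw [if_pos h1]
          have hcw : c ≤ w i := hmono i (M+1) hi.1 (by omega) hMN'
          nlinarith [mul_nonneg (sub_nonneg.2 hcw) (sub_nonneg.2 hxw),
            mul_pos hw hc, inv_pos.2 hw]
        · rw [if_neg h1]
          have hwc : w i ≤ c := hmono (M+1) i (by omega) (by omega) hi.2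
          nlinarith [mul_nonneg (sub_nonneg.2 hwc)
            (mul_nonneg (inv_pos.2 hw).le hx0), inv_pos.2 hw]
      have hle := Finset.sum_le_sum key
      rw [Finset.sum_add_distrib, ← Finset.mul_sum] at hle
      have hite : ∑ i ∈ Finset.Icc 1 N, (if i ≤ M then w i - c else 0)
          = ∑ i ∈ Finset.Icc 1 M, w i - M * c := by
        rw [hsplit]
        have ha : ∑ i ∈ Finset.Icc 1 M, (if i ≤ M then w i - c else 0)
            = ∑ i ∈ Finset.Icc 1 M, (w i - c) := by
          refine Finset.sum_congr rfl (fun i hi => ?_)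
          simp only [Finset.mem_Icc] at hi
          rw [if_pos hi.2]
        have hb' : ∑ i ∈ Finset.Icc (M+1) N, (if i ≤ M then w i - c else 0) = 0 := by
          refine Finset.sum_eq_zero (fun i hi => ?_)
          simp only [Finset.mem_Icc] at hi
          rw [if_neg (by omega)]
        rw [ha, hb', Finset.sum_sub_distrib, Finset.sum_const, Nat.card_Icc,
          Nat.add_sub_cancel, nsmul_eq_mul, add_zero]
      have hcb : c * ∑ i ∈ Finset.Icc 1 N, (w i)⁻¹ * x i ≤ c * b :=
        mul_le_mul_of_nonneg_left hsum hc.le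
      rw [hite] at hle
      have : c * (b - M) = c * b - M * c := by ring
      linarith
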